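/- Let N ≥ 1, s ∈ (1/2,1) and c₀ > 0. Let F : ℝ → ℝ be a measurable function such that for every τ ∈ ℝ, ∫_ℝ |F(r) − F(τ)| / |r − τ|^{2 − 1/(2s)} dr ≤ c₀ · min(1, 1/|τ|). Define K : (ℝ^N \ {0}) × ℝ → ℝ by K(x,t) = |x|^{-N} F(t/|x|^{2s}). Then for every x ∈ ℝ^N with x ≠ 0 and every t ∈ ℝ, ∫_ℝ |K(x,r) − K(x,t)| / |r − t|^{2 − 1/(2s)} dr ≤ c₀ / (|x|^{N−1} · max(|x|, |t|^{1/(2s)})^{2s}). -/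

import Mathlib

open MeasureTheory
open scoped ENNReal

private lemma lintegral_div_scale (g : ℝ → ℝ≥0∞) (hg : Measurable g) {c : ℝ} (hc : 0 < c) :
    (∫⁻ r : ℝ, g (r / c)) = ENNReal.ofReal c * ∫⁻ u : ℝ, g u := by
  have h1 : (∫⁻ r : ℝ, g (r / c)) = ∫⁻ r : ℝ, g (c⁻¹ * r) := by
    simp_rw [inv_mul_eq_div]
  rw [h1, ← lintegral_map hg (measurable_const_mul c⁻¹),
    Real.map_volume_mul_left (inv_ne_zero hc.ne'), lintegral_smul_measure, inv_inv,
    abs_of_pos hc, smul_eq_mul]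

/-- Let `N ≥ 1`, `s ∈ (1/2,1)`, `c₀ > 0` and let `F : ℝ → ℝ` be measurable
with `∫ |F(r) − F(τ)|/|r−τ|^{2−1/(2s)} dr ≤ c₀ min(1, 1/|τ|)` for every `τ`
(right-hand side in `[0,∞]`, so `1/|0| = ∞`). Define `K(x,t) = |x|^{-N} F(t/|x|^{2s})`
for `x ≠ 0`. Then for every `x ≠ 0` and `t ∈ ℝ`,
`∫ |K(x,r) − K(x,t)|/|r−t|^{2−1/(2s)} dr ≤ c₀ / (|x|^{N−1} max(|x|,|t|^{1/(2s)})^{2s})`. -/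
theorem stmt5 (N : ℕ) (hN : 1 ≤ N) (s : ℝ) (hs : 1 / 2 < s) (hs1 : s < 1)
    (c₀ : ℝ) (hc₀ : 0 < c₀) (F : ℝ → ℝ) (hFmeas : Measurable F)
    (hF : ∀ τ : ℝ,
      (∫⁻ r : ℝ, ENNReal.ofReal (|F r - F τ| / |r - τ| ^ (2 - 1 / (2 * s)))) ≤
        ENNReal.ofReal c₀ * min 1 (ENNReal.ofReal |τ|)⁻¹) :
    ∀ (x : EuclideanSpace ℝ (Fin N)), x ≠ 0 → ∀ t : ℝ,
      (∫⁻ r : ℝ, ENNReal.ofReal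
          (|(‖x‖ ^ N)⁻¹ * F (r / ‖x‖ ^ (2 * s)) - (‖x‖ ^ N)⁻¹ * F (t / ‖x‖ ^ (2 * s))| /
            |r - t| ^ (2 - 1 / (2 * s)))) ≤
        ENNReal.ofReal (c₀ / (‖x‖ ^ (N - 1) * (max ‖x‖ (|t| ^ (1 / (2 * s)))) ^ (2 * s))) := by
  intro x hx t
  set a : ℝ := ‖x‖ with ha_def
  have ha : 0 < a := norm_pos_iff.mpr hx
  have hs0 : (0 : ℝ) < 2 * s := by linarith
  set lam : ℝ := a ^ (2 * s) with hlam_def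
  have hlam : 0 < lam := Real.rpow_pos_of_pos ha _
  set p : ℝ := 2 - 1 / (2 * s) with hp_def
  have hp : 0 < p := by
    have : 1 / (2 * s) < 1 := by
      rw [div_lt_one hs0]; linarith
    simp only [hp_def]; linarith
  set τ : ℝ := t / lam with hτ_def
  set L : ℝ := lam ^ p with hL_def
  have hL : 0 < L := Real.rpow_pos_of_pos hlam _
  have haN : (0 : ℝ) < a ^ N := pow_pos ha _
  have haN1 : (0 : ℝ) < a ^ (N - 1) := pow_pos ha _
  -- key algebraic relation
  have hkey : a ^ (N - 1) * lam * lam = a ^ N * L := by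
    have h1 : (a : ℝ) ^ (N - 1) = a ^ ((N : ℝ) - 1) := by
      rw [← Real.rpow_natCast a (N - 1), Nat.cast_sub hN, Nat.cast_one]
    have h2 : (a : ℝ) ^ N = a ^ (N : ℝ) := by rw [← Real.rpow_natCast a N]
    have h3 : L = a ^ (2 * s * p) := by
      rw [hL_def, hlam_def, ← Real.rpow_mul ha.le]
    rw [h1, h2, h3, hlam_def, ← Real.rpow_add ha, ← Real.rpow_add ha, ← Real.rpow_add ha]
    congr 1
    have : 2 * s ≠ 0 := hs0.ne'
    field_simp [hp_def]
    rw [hp_def]; linear_combination mul_one_div_cancel this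
  -- the rescaled integrand
  set g : ℝ → ℝ≥0∞ := fun u => ENNReal.ofReal (|F u - F τ| / |u - τ| ^ p) with hg_def
  have hg : Measurable g := by
    apply ENNReal.measurable_ofReal.comp
    exact ((hFmeas.sub measurable_const).abs.div
      (((measurable_id.sub measurable_const).abs).pow_const p))
  -- pointwise rewriting of the integrand
  have hpt : ∀ r : ℝ,
      ENNReal.ofReal (|(a ^ N)⁻¹ * F (r / lam) - (a ^ N)⁻¹ * F (t / lam)| / |r - t| ^ p)
        = ENNReal.ofReal ((a ^ N)⁻¹ / L) * g (r / lam) := by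
    intro r
    have h1 : |(a ^ N)⁻¹ * F (r / lam) - (a ^ N)⁻¹ * F (t / lam)|
        = (a ^ N)⁻¹ * |F (r / lam) - F τ| := by
      rw [hτ_def, ← mul_sub, abs_mul, abs_of_nonneg (inv_nonneg.mpr haN.le)]
    have h2 : |r - t| ^ p = L * |r / lam - τ| ^ p := by
      have hrt : r - t = lam * (r / lam - τ) := by
        rw [hτ_def]; field_simp
      rw [hrt, abs_mul, abs_of_pos hlam, Real.mul_rpow hlam.le (abs_nonneg _), hL_def]
    rw [h1, h2, ← ENNReal.ofReal_mul (by positivity)]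
    congr 1
    rw [div_mul_div_comm]
  calc
    (∫⁻ r : ℝ, ENNReal.ofReal
        (|(a ^ N)⁻¹ * F (r / lam) - (a ^ N)⁻¹ * F (t / lam)| / |r - t| ^ p))
      = ∫⁻ r : ℝ, ENNReal.ofReal ((a ^ N)⁻¹ / L) * g (r / lam) := by
        simp_rw [hpt]
    _ = ENNReal.ofReal ((a ^ N)⁻¹ / L) * ∫⁻ r : ℝ, g (r / lam) :=
        lintegral_const_mul' _ _ ENNReal.ofReal_ne_top
    _ = ENNReal.ofReal ((a ^ N)⁻¹ / L) * (ENNReal.ofReal lam * ∫⁻ u : ℝ, g u) := by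
        rw [lintegral_div_scale g hg hlam]
    _ ≤ ENNReal.ofReal ((a ^ N)⁻¹ / L) *
        (ENNReal.ofReal lam * (ENNReal.ofReal c₀ * min 1 (ENNReal.ofReal |τ|)⁻¹)) := by
        gcongr
        exact hF τ
    _ ≤ ENNReal.ofReal (c₀ / (a ^ (N - 1) * (max a (|t| ^ (1 / (2 * s)))) ^ (2 * s))) := by
        -- identify the max
        have hM : (max a (|t| ^ (1 / (2 * s)))) ^ (2 * s) = max lam |t| := by
          have habs : (|t| ^ (1 / (2 * s))) ^ (2 * s) = |t| := by
            rw [← Real.rpow_mul (abs_nonneg t), one_div_mul_cancel hs0.ne', Real.rpow_one]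
          rcases le_total a (|t| ^ (1 / (2 * s))) with h | h
          · rw [max_eq_right h, habs, max_eq_right]
            calc lam = a ^ (2 * s) := rfl
              _ ≤ (|t| ^ (1 / (2 * s))) ^ (2 * s) := Real.rpow_le_rpow ha.le h hs0.le
              _ = |t| := habs
          · rw [max_eq_left h, max_eq_left]
            calc |t| = (|t| ^ (1 / (2 * s))) ^ (2 * s) := habs.symm
              _ ≤ a ^ (2 * s) := Real.rpow_le_rpow (Real.rpow_nonneg (abs_nonneg t) _) h hs0.le
        rw [hM]
        have hτabs : |τ| = |t| / lam := by
          rw [hτ_def, abs_div, abs_of_pos hlam]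
        rcases le_or_gt |t| lam with h | h
        · -- max = lam, min = 1
          rw [max_eq_left h]
          have hmin : min 1 (ENNReal.ofReal |τ|)⁻¹ = 1 := by
            apply min_eq_left
            rw [ENNReal.one_le_inv, ENNReal.ofReal_le_one, hτabs, div_le_one hlam]
            exact h
          rw [hmin, mul_one, ← ENNReal.ofReal_mul (by positivity),
            ← ENNReal.ofReal_mul (by positivity)]
          apply ENNReal.ofReal_le_ofReal
          apply le_of_eq
          field_simp
          linear_combination hkey
        · -- max = |t|, min = ofReal (lam / |t|)
          have ht : (0:ℝ) < |t| := lt_trans hlam h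
          rw [max_eq_right h.le]
          have hτ1 : (1:ℝ) ≤ |τ| := by
            rw [hτabs, le_div_iff₀ hlam, one_mul]; exact h.le
          have hmin : min 1 (ENNReal.ofReal |τ|)⁻¹ = ENNReal.ofReal (lam / |t|) := by
            rw [min_eq_right]
            · rw [← ENNReal.ofReal_inv_of_pos (by linarith : (0:ℝ) < |τ|)]
              congr 1
              rw [hτabs, inv_div]
            · rw [ENNReal.inv_le_one, ENNReal.one_le_ofReal]; exact hτ1
          rw [hmin, ← ENNReal.ofReal_mul hc₀.le, ← ENNReal.ofReal_mul hlam.le,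
            ← ENNReal.ofReal_mul (by positivity)]
          apply ENNReal.ofReal_le_ofReal
          apply le_of_eq
          field_simp
          linear_combination hkey
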